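/- Let (G,R) be a cyclically ordered abelian group and n ≥ 2 an integer. If the unwound uw(G) is an n-regular linearly ordered group, then G is n-regular. -/

import Mathlib

section CyclicOrder

variable {G : Type*}

/-- A compatible cyclic order on an abelian group. -/
structure IsCyclicOrder [AddCommGroup G] (R : G → G → G → Prop) : Prop where
  strict : ∀ a b c : G, R a b c → a ≠ b ∧ b ≠ c ∧ c ≠ a
  cyc : ∀ a b c : G, R a b c → R b c a
  asymm : ∀ a b c : G, R a b c → ¬ R a c b
  trans' : ∀ a b c d : G, R a b c → R a c d → R a b d
  total : ∀ a b c : G, a ≠ b → b ≠ c → c ≠ a → R a b c ∨ R a c b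
  compat : ∀ a b c d : G, R a b c → R (a + d) (b + d) (c + d)

/-- `RChain R m y` expresses `R (y 0, y 1, …, y (m-1))`, i.e.
`R (y i) (y (i+1)) (y (m-1))` for all `i ≤ m - 3`. -/
def RChain (R : G → G → G → Prop) (m : ℕ) (y : ℕ → G) : Prop :=
  ∀ i : ℕ, i + 3 ≤ m → R (y i) (y (i + 1)) (y (m - 1))

/-- `G` is `n`-regular. -/
def NRegularC [AddCommGroup G] (R : G → G → G → Prop) (n : ℕ) : Prop :=
  ∀ x : ℕ → G,
    RChain R (n + 2) (fun i => if i = 0 then 0 else if i = n + 1 then -(x n) else x i) →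
    ∃ g : G, (R (x 1) (n • g) (x n) ∨ n • g = x 1 ∨ n • g = x n) ∧
      RChain R (n + 1) (fun i => if i = n then x n else i • g)

/-- `G` is c-`n`-regular. -/
def CNRegular [AddCommGroup G] (R : G → G → G → Prop) (n : ℕ) : Prop :=
  ∀ x : ℕ → G,
    RChain R (n + 1) (fun i => if i = 0 then 0 else x i) →
    ∃ g : G, (n • g = x 1 ∨ n • g = x n ∨ R (x 1) (n • g) (x n)) ∧
      RChain R (n + 1) (fun i => if i = n then x n else i • g)

open Classical in
/-- Addition on the unwound `ℤ × G` of `(G, R)`. -/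
noncomputable def uwAdd [AddCommGroup G] (R : G → G → G → Prop) (p q : ℤ × G) : ℤ × G :=
  if p.2 = 0 ∨ q.2 = 0 ∨ R 0 p.2 (p.2 + q.2) then (p.1 + q.1, p.2 + q.2)
  else (p.1 + q.1 + 1, p.2 + q.2)

open Classical in
/-- Negation on the unwound. -/
noncomputable def uwNeg [AddCommGroup G] (p : ℤ × G) : ℤ × G :=
  if p.2 = 0 then (-p.1, 0) else (-p.1 - 1, -p.2)

/-- The order on the unwound. -/
def uwLt [AddCommGroup G] (R : G → G → G → Prop) (p q : ℤ × G) : Prop :=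
  p.1 < q.1 ∨ (p.1 = q.1 ∧ R 0 p.2 q.2) ∨ (p.1 = q.1 ∧ p.2 = 0 ∧ q.2 ≠ 0)

/-- Natural scalar multiplication on the unwound. -/
noncomputable def uwNsmul [AddCommGroup G] (R : G → G → G → Prop) : ℕ → ℤ × G → ℤ × G
  | 0, _ => (0, 0)
  | n + 1, x => uwAdd R (uwNsmul R n x) x

open Classical in
/-- Integer scalar multiplication on the unwound. -/
noncomputable def uwZsmul [AddCommGroup G] (R : G → G → G → Prop) (n : ℤ) (x : ℤ × G) :
    ℤ × G :=
  if 0 ≤ n then uwNsmul R n.toNat x else uwNeg (uwNsmul R (-n).toNat x)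

/-- The linear part `l(G)` of `(G, R)`. -/
def lpart [AddCommGroup G] (R : G → G → G → Prop) : Set G :=
  {x : G | ∀ n : ℤ, uwLt R (uwZsmul R n ((0 : ℤ), x)) ((1 : ℤ), (0 : G))}

/-- The linear order on the linear part: `x < y` iff `R 0 (y - x) (-(y-x))`. -/
def lLt [AddCommGroup G] (R : G → G → G → Prop) (x y : G) : Prop :=
  R 0 (y - x) (x - y)

/-- `l(G)` is an `n`-regular linearly ordered group. -/
def lpartNRegular [AddCommGroup G] (R : G → G → G → Prop) (n : ℕ) : Prop :=
  ∀ x : ℕ → G, (∀ i : ℕ, i < n → x i ∈ lpart R) →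
    (∀ i : ℕ, i + 1 < n → lLt R (x i) (x (i + 1))) →
    ∃ g ∈ lpart R, (lLt R (x 0) (n • g) ∨ x 0 = n • g) ∧
      (lLt R (n • g) (x (n - 1)) ∨ n • g = x (n - 1))

/-- The unwound is an `n`-regular linearly ordered group. -/
def uwNRegular [AddCommGroup G] (R : G → G → G → Prop) (n : ℕ) : Prop :=
  ∀ x : ℕ → ℤ × G, (∀ i : ℕ, i + 1 < n → uwLt R (x i) (x (i + 1))) →
    ∃ g : ℤ × G, (uwLt R (x 0) (uwNsmul R n g) ∨ x 0 = uwNsmul R n g) ∧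
      (uwLt R (uwNsmul R n g) (x (n - 1)) ∨ uwNsmul R n g = x (n - 1))

/-- `K(G) = G/l(G)` contains a primitive `n`-th root of `1`,
i.e. an element of order exactly `n`. -/
def KPrimitiveRoot [AddCommGroup G] (R : G → G → G → Prop) (n : ℕ) : Prop :=
  ∃ x : G, n • x ∈ lpart R ∧ ∀ k : ℕ, 0 < k → k < n → k • x ∉ lpart R

/-- `K(G) = G/l(G)` is `n`-divisible. -/
def KDivisibleBy [AddCommGroup G] (R : G → G → G → Prop) (n : ℕ) : Prop :=
  ∀ x : G, ∃ y : G, x - n • y ∈ lpart R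

end CyclicOrder


section Aux
variable {G : Type*} [AddCommGroup G] {R : G → G → G → Prop}

lemma uwAdd_snd (R : G → G → G → Prop) (p q : ℤ × G) : (uwAdd R p q).2 = p.2 + q.2 := by
  unfold uwAdd; split_ifs <;> rfl

lemma uwNsmul_snd (R : G → G → G → Prop) (k : ℕ) (p : ℤ × G) :
    (uwNsmul R k p).2 = k • p.2 := by
  induction k with
  | zero => simp [uwNsmul]
  | succ k ih => rw [uwNsmul, uwAdd_snd, ih, succ_nsmul]

lemma uwAdd_fst (R : G → G → G → Prop) (p q : ℤ × G) :
    ((uwAdd R p q).1 = p.1 + q.1 ∧ (p.2 = 0 ∨ q.2 = 0 ∨ R 0 p.2 (p.2 + q.2))) ∨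
      (uwAdd R p q).1 = p.1 + q.1 + 1 := by
  unfold uwAdd; split_ifs with hcond
  · exact Or.inl ⟨rfl, hcond⟩
  · exact Or.inr rfl

lemma cyc3 (h : IsCyclicOrder R) {c u v w : G} (h1 : R c u v) (h2 : R c v w) :
    R u v w :=
  h.cyc _ _ _ (h.cyc _ _ _ (h.trans' v w c u (h.cyc _ _ _ h2)
    (h.cyc _ _ _ (h.cyc _ _ _ h1))))

lemma uwNsmul_fst_ge (R : G → G → G → Prop) (m : ℤ) (a : G) (k : ℕ) :
    (k : ℤ) * m ≤ (uwNsmul R k ((m, a) : ℤ × G)).1 := by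
  induction k with
  | zero => simp [uwNsmul]
  | succ k ih =>
      rcases uwAdd_fst R (uwNsmul R k ((m, a) : ℤ × G)) (m, a) with ⟨he, -⟩ | he <;>
      · rw [uwNsmul, he]; push_cast; linarith

lemma uwNsmul_fst_le (R : G → G → G → Prop) (m : ℤ) (a : G) :
    ∀ k : ℕ, 1 ≤ k → (uwNsmul R k ((m, a) : ℤ × G)).1 ≤ m + ((k : ℤ) - 1) * (m + 1) := by
  intro k hk
  induction k, hk using Nat.le_induction with
  | base => simp [uwNsmul, uwAdd]
  | succ k hk ih =>
      rcases uwAdd_fst R (uwNsmul R k ((m, a) : ℤ × G)) (m, a) with ⟨he, -⟩ | he <;>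
      · rw [uwNsmul, he]; push_cast; linarith

end Aux

/-- If the unwound `uw(G)` is an `n`-regular linearly ordered group, then `G` is
`n`-regular. -/
theorem nregular_of_uw_nregular (G : Type*) [AddCommGroup G]
    (R : G → G → G → Prop) (h : IsCyclicOrder R) (n : ℕ) (hn : 2 ≤ n)
    (huw : uwNRegular R n) :
    NRegularC R n := by
  intro x hx
  -- unpack the chain hypothesis
  have hy0 : R 0 (x 1) (-(x n)) := by
    have e1 : (1:ℕ) ≠ n + 1 := by omega
    have e2 : n + 1 ≠ 0 := by omega
    simpa [show n + 2 - 1 = n + 1 by omega, e1, e2, show n ≠ 0 by omega] using hx 0 (by omega)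
  have hystep : ∀ i, 1 ≤ i → i + 1 ≤ n → R (x i) (x (i + 1)) (-(x n)) := by
    intro i h1 h2
    have e1 : i ≠ 0 := by omega
    have e2 : i ≠ n + 1 := by omega
    have e3 : i + 1 ≠ 0 := by omega
    have e4 : i + 1 ≠ n + 1 := by omega
    have e5 : n + 1 ≠ 0 := by omega
    simpa [show n + 2 - 1 = n + 1 by omega, e1, e2, e3, e4, e5, show i ≠ n by omega] using hx i (by omega)
  have hx1ne : x 1 ≠ 0 := fun hne => (h.strict _ _ _ hy0).1 hne.symm
  -- centered at c := -(x n) : 0 < x 1 < ... < x n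
  have hc0 : ∀ j, 1 ≤ j → j ≤ n → R (-(x n)) 0 (x j) := by
    intro j h1 h2
    induction j, h1 using Nat.le_induction with
    | base => exact h.cyc _ _ _ (h.cyc _ _ _ hy0)
    | succ j hj ih =>
        exact h.trans' _ _ _ _ (ih (by omega))
          (h.cyc _ _ _ (h.cyc _ _ _ (hystep j hj (by omega))))
  have hRj : ∀ j, 1 ≤ j → j + 1 ≤ n → R 0 (x j) (x (j + 1)) := by
    intro j h1 h2
    exact cyc3 h (hc0 j h1 (by omega))
      (h.cyc _ _ _ (h.cyc _ _ _ (hystep j h1 h2)))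
  -- apply regularity of the unwound
  obtain ⟨g, h1, h2⟩ := huw (fun i => ((0 : ℤ), x (i + 1))) (by
    intro i hi
    exact Or.inr (Or.inl ⟨rfl, hRj (i + 1) (by omega) (by omega)⟩))
  obtain ⟨m, a⟩ := g
  rw [show n - 1 + 1 = n by omega] at h2
  have hsnd : (uwNsmul R n ((m, a) : ℤ × G)).2 = n • a := uwNsmul_snd R n (m, a)
  -- the first coordinate of n • g is 0
  have hk1 : 0 ≤ (uwNsmul R n ((m, a) : ℤ × G)).1 := by
    rcases h1 with hlt | heq
    · rcases hlt with hlt | ⟨he, -⟩ | ⟨he, -⟩ <;> omega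
    · rw [← heq]
  have hk2 : (uwNsmul R n ((m, a) : ℤ × G)).1 ≤ 0 := by
    rcases h2 with hlt | heq
    · rcases hlt with hlt | ⟨he, -⟩ | ⟨he, -⟩ <;> omega
    · rw [heq]
  have hk0 : (uwNsmul R n ((m, a) : ℤ × G)).1 = 0 := le_antisymm hk2 hk1
  -- sandwich facts in G
  have H1 : R 0 (x 1) (n • a) ∨ n • a = x 1 := by
    rcases h1 with hlt | heq
    · rcases hlt with hlt | ⟨-, hR⟩ | ⟨-, he, -⟩
      · omega
      · rw [hsnd] at hR; exact Or.inl hR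
      · exact absurd he hx1ne
    · right; rw [← hsnd, ← heq]
  have H2 : R 0 (n • a) (x n) ∨ n • a = 0 ∨ n • a = x n := by
    rcases h2 with hlt | heq
    · rcases hlt with hlt | ⟨-, hR⟩ | ⟨-, he, -⟩
      · omega
      · rw [hsnd] at hR; exact Or.inl hR
      · rw [hsnd] at he; exact Or.inr (Or.inl he)
    · right; right; rw [← hsnd, heq]
  have hbne : n • a ≠ 0 := by
    rcases H1 with hR | he
    · exact (h.strict _ _ _ hR).2.2
    · rw [he]; exact hx1ne
  have hane : a ≠ 0 := fun hz => hbne (by rw [hz, smul_zero])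
  have H2' : R 0 (n • a) (x n) ∨ n • a = x n := by
    rcases H2 with hR | hz | he
    · exact Or.inl hR
    · exact absurd hz hbne
    · exact Or.inr he
  -- determine m = 0
  have hge := uwNsmul_fst_ge R m a n
  have hle := uwNsmul_fst_le R m a n (by omega)
  have hm0 : m = 0 := by
    rw [hk0] at hge hle
    nlinarith [hge, hle, (by exact_mod_cast hn : (2:ℤ) ≤ (n:ℕ))]
  subst hm0
  -- monotone first coordinates, all zero up to n
  have hmono : ∀ j k : ℕ, j ≤ k →
      (uwNsmul R j ((0, a) : ℤ × G)).1 ≤ (uwNsmul R k ((0, a) : ℤ × G)).1 := by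
    intro j k hjk
    induction k, hjk using Nat.le_induction with
    | base => exact le_refl _
    | succ k hk ih =>
        refine le_trans ih ?_
        rcases uwAdd_fst R (uwNsmul R k ((0, a) : ℤ × G)) (0, a) with ⟨he, -⟩ | he <;>
          rw [uwNsmul, he] <;> omega
  have hzero : ∀ k, k ≤ n → (uwNsmul R k ((0, a) : ℤ × G)).1 = 0 := by
    intro k hk
    have h1' := uwNsmul_fst_ge R 0 a k
    have h2' := hmono k n hk
    rw [hk0] at h2'
    simp only [mul_zero] at h1'
    omega
  -- branch condition holds at every step below n
  have hC : ∀ k, k < n → (k • a = 0 ∨ a = 0 ∨ R 0 (k • a) (k • a + a)) := by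
    intro k hk
    rcases uwAdd_fst R (uwNsmul R k ((0, a) : ℤ × G)) (0, a) with ⟨-, hcond⟩ | he
    · rw [uwNsmul_snd R k] at hcond
      exact hcond
    · exfalso
      have e1 := hzero k (by omega)
      have e2 := hzero (k + 1) (by omega)
      rw [uwNsmul, he] at e2
      omega
  -- chain R 0 (i•a) ((i+1)•a) for 1 ≤ i < n
  have Rstep : ∀ i, 1 ≤ i → i < n → R 0 (i • a) ((i + 1) • a) := by
    intro i h1 h2
    induction i, h1 using Nat.le_induction with
    | base =>
        rcases hC 1 (by omega) with hz | hz | hR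
        · rw [one_nsmul] at hz; exact absurd hz hane
        · exact absurd hz hane
        · rw [← succ_nsmul] at hR; exact hR
    | succ i hi ih =>
        have hprev := ih (by omega)
        have hne : (i + 1) • a ≠ 0 := (h.strict _ _ _ hprev).2.2
        rcases hC (i + 1) (by omega) with hz | hz | hR
        · exact absurd hz hne
        · exact absurd hz hane
        · rw [← succ_nsmul] at hR; exact hR
  -- R 0 (j•a) (k•a) for 1 ≤ j < k ≤ n
  have Rchain2 : ∀ j k, 1 ≤ j → j < k → k ≤ n → R 0 (j • a) (k • a) := by
    intro j k hj hjk hkn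
    induction k, hjk using Nat.le_induction with
    | base => exact Rstep j hj (by omega)
    | succ k hk ih =>
        exact h.trans' _ _ _ _ (ih (by omega)) (Rstep k (by omega) (by omega))
  have Rtop : ∀ j, 1 ≤ j → j < n → R 0 (j • a) (x n) := by
    intro j h1 h2
    rcases H2' with hR | he
    · exact h.trans' _ _ _ _ (Rchain2 j n h1 h2 (le_refl n)) hR
    · rw [← he]; exact Rchain2 j n h1 h2 (le_refl n)
  refine ⟨a, ?_, ?_⟩
  · rcases H1 with hR1 | he1
    · rcases H2' with hR2 | he2
      · exact Or.inl (cyc3 h hR1 hR2)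
      · exact Or.inr (Or.inr he2)
    · exact Or.inr (Or.inl he1)
  · intro i hi
    have e1 : i ≠ n := by omega
    have e2 : i + 1 ≠ n := by omega
    simp only [show n + 1 - 1 = n by omega, if_neg e1, if_neg e2, ite_true]
    rcases Nat.eq_zero_or_pos i with hz | hpos
    · subst hz
      simpa using Rtop 1 (by omega) (by omega)
    · exact cyc3 h (Rstep i hpos (by omega)) (Rtop (i + 1) (by omega) (by omega))
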